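/- Let G be a multigraph of arboricity λ, and suppose an edge-orientation process maintains orientations G_0, G_1, …, where at stage i a maximal set of edge-disjoint length-i directed s–t paths in the auxiliary graph G'_i is found and reversed. Then G'_i has no s–t path of length strictly less than i, and after ℓ = O((log n)/ε) stages, every vertex of G_ℓ has out-degree at most D = ⌈(1+ε)λ⌉. -/

import Mathlib

/-- The source of edge `e` (with endpoints `ends e`) under orientation `o`. -/
def dsrc {V E : Type*} (ends : E → V × V) (o : E → Bool) (e : E) : V :=
  if o e then (ends e).1 else (ends e).2

/-- The target of edge `e` under orientation `o`. -/
def dtgt {V E : Type*} (ends : E → V × V) (o : E → Bool) (e : E) : V :=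
  if o e then (ends e).2 else (ends e).1

/-- The out-degree of vertex `v` under orientation `o`. -/
def outdeg {V E : Type*} [Fintype E] [DecidableEq V]
    (ends : E → V × V) (o : E → Bool) (v : V) : ℕ :=
  (Finset.univ.filter (fun e => dsrc ends o e = v)).card

/-- `IsDipath ends o p u v`: the list of edges `p` forms a directed walk from `u` to `v`
under orientation `o`. -/
def IsDipath {V E : Type*} (ends : E → V × V) (o : E → Bool) : List E → V → V → Prop
  | [], u, v => u = v
  | e :: p, u, v => dsrc ends o e = u ∧ IsDipath ends o p (dtgt ends o e) v

/-- `GoodFamily ends o D i P`: `P` is a set of edge-disjoint directed paths corresponding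
to edge-disjoint `s`–`t` paths of length exactly `i` in the auxiliary graph: each `p ∈ P`
has `i − 2` distinct edges, goes from a vertex of out-degree `> D` to one of out-degree
`< D`, the paths are pairwise edge-disjoint, and at most `outdeg(u) − D` paths start at any
`u` (resp. `D − outdeg(v)` end at any `v`), respecting the auxiliary multiplicities. -/
def GoodFamily {V E : Type*} [Fintype E] [DecidableEq V] [DecidableEq E]
    (ends : E → V × V) (o : E → Bool) (D i : ℕ) (P : Finset (List E)) : Prop :=
  (∀ p ∈ P, p.Nodup ∧ p.length + 2 = i ∧
    ∃ u v : V, IsDipath ends o p u v ∧ D < outdeg ends o u ∧ outdeg ends o v < D) ∧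
  (∀ p ∈ P, ∀ q ∈ P, p ≠ q → List.Disjoint p q) ∧
  (∀ u : V, (P.filter (fun p => p.head?.map (dsrc ends o) = some u)).card ≤
    outdeg ends o u - D) ∧
  (∀ v : V, (P.filter (fun p => p.getLast?.map (dtgt ends o) = some v)).card ≤
    D - outdeg ends o v)

set_option linter.unusedSectionVars false

section Basic
variable {V E : Type*} (ends : E → V × V) {o o' : E → Bool}

lemma dsrc_congr {e : E} (h : o' e = o e) : dsrc ends o' e = dsrc ends o e := by
  simp [dsrc, h]

lemma dtgt_congr {e : E} (h : o' e = o e) : dtgt ends o' e = dtgt ends o e := by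
  simp [dtgt, h]

lemma dsrc_neg {e : E} (h : o' e = !(o e)) : dsrc ends o' e = dtgt ends o e := by
  cases hb : o e <;> simp [dsrc, dtgt, h, hb]

lemma dtgt_neg {e : E} (h : o' e = !(o e)) : dtgt ends o' e = dsrc ends o e := by
  cases hb : o e <;> simp [dsrc, dtgt, h, hb]

lemma isDipath_nil {u v : V} : IsDipath ends o [] u v ↔ u = v := Iff.rfl

lemma isDipath_cons {e : E} {p : List E} {u v : V} :
    IsDipath ends o (e :: p) u v ↔
      dsrc ends o e = u ∧ IsDipath ends o p (dtgt ends o e) v := Iff.rfl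

lemma isDipath_append {p q : List E} {u v : V} :
    IsDipath ends o (p ++ q) u v ↔ ∃ w, IsDipath ends o p u w ∧ IsDipath ends o q w v := by
  induction p generalizing u with
  | nil => simp [isDipath_nil, IsDipath]
  | cons e p ih =>
      simp only [List.cons_append, isDipath_cons, ih]
      constructor
      · rintro ⟨h1, w, h2, h3⟩; exact ⟨w, ⟨h1, h2⟩, h3⟩
      · rintro ⟨w, ⟨h1, h2⟩, h3⟩; exact ⟨h1, w, h2, h3⟩

lemma isDipath_congr {p : List E} {u v : V} (h : ∀ e ∈ p, o' e = o e)
    (hp : IsDipath ends o p u v) : IsDipath ends o' p u v := by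
  induction p generalizing u with
  | nil => exact hp
  | cons e p ih =>
      obtain ⟨h1, h2⟩ := hp
      refine ⟨(dsrc_congr ends (h e (by simp))).trans h1, ?_⟩
      rw [dtgt_congr ends (h e (by simp))]
      exact ih (fun e' he' => h e' (by simp [he'])) h2

lemma isDipath_head {e : E} {p : List E} {u v : V} (h : IsDipath ends o (e :: p) u v) :
    dsrc ends o e = u := h.1

lemma isDipath_head? {p : List E} {u v : V} (hne : p ≠ []) (h : IsDipath ends o p u v) :
    p.head?.map (dsrc ends o) = some u := by
  cases p with
  | nil => exact absurd rfl hne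
  | cons e p => simp [h.1]

lemma isDipath_getLast? {p : List E} {u v : V} (hne : p ≠ []) (h : IsDipath ends o p u v) :
    p.getLast?.map (dtgt ends o) = some v := by
  induction p generalizing u with
  | nil => exact absurd rfl hne
  | cons e p ih =>
      cases p with
      | nil => simp [isDipath_cons, isDipath_nil] at h; simp [h.2]
      | cons f q =>
          rw [List.getLast?_cons_cons]
          exact ih (List.cons_ne_nil f q) h.2

/-- remove a duplicated edge from a directed walk -/
lemma isDipath_shorten {p : List E} {u v : V} (h : IsDipath ends o p u v)
    (hnd : ¬ p.Nodup) : ∃ q : List E, q.length < p.length ∧ IsDipath ends o q u v := by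
  induction p generalizing u with
  | nil => simp at hnd
  | cons e p ih =>
      obtain ⟨h1, h2⟩ := h
      by_cases hmem : e ∈ p
      · -- cut out the loop: p = s ++ e :: t, use e :: t
        obtain ⟨s, t, rfl⟩ := List.append_of_mem hmem
        rw [isDipath_append] at h2
        obtain ⟨w, _, h4⟩ := h2
        exact ⟨e :: t, by simp, h1, h4.2⟩
      · have : ¬ p.Nodup := by
          intro hc; exact hnd (List.nodup_cons.mpr ⟨hmem, hc⟩)
        obtain ⟨q, hq1, hq2⟩ := ih h2 this
        exact ⟨e :: q, by simpa using hq1, h1, hq2⟩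

end Basic


section Count
variable {V E : Type*} [Fintype E] [DecidableEq V] [DecidableEq E] (ends : E → V × V)
variable {o o' : E → Bool}

/-- along a directed walk, (#edges out of v) + [walk ends at v] = (#edges into v) + [walk starts at v] -/
lemma dipath_count {p : List E} {u w v : V} (h : IsDipath ends o p u w) :
    p.countP (fun e => dsrc ends o e = v) + (if w = v then 1 else 0) =
    p.countP (fun e => dtgt ends o e = v) + (if u = v then 1 else 0) := by
  induction p generalizing u with
  | nil => cases h; rfl
  | cons e p ih =>
      obtain ⟨h1, h2⟩ := h
      have := ih h2
      simp only [List.countP_cons]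
      subst h1
      by_cases hs : dsrc ends o e = v <;> by_cases ht : dtgt ends o e = v <;>
        simp [hs, ht] at this ⊢ <;> omega

variable (o P) in
/-- number of paths in `P` starting at `v` -/
noncomputable def csP (P : Finset (List E)) (v : V) : ℕ :=
  (P.filter (fun p => p.head?.map (dsrc ends o) = some v)).card

variable (o P) in
/-- number of paths in `P` ending at `v` -/
noncomputable def ceP (P : Finset (List E)) (v : V) : ℕ :=
  (P.filter (fun p => p.getLast?.map (dtgt ends o) = some v)).card

lemma outdeg_flip {P : Finset (List E)}
    (hnd : ∀ p ∈ P, p.Nodup)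
    (hdi : ∀ p ∈ P, ∀ q ∈ P, p ≠ q → List.Disjoint p q)
    (hpath : ∀ p ∈ P, p ≠ [] ∧ ∃ u w, IsDipath ends o p u w)
    (ho' : ∀ e, o' e = if ∃ p ∈ P, e ∈ p then !(o e) else o e) (v : V) :
    outdeg ends o' v + csP ends o P v = outdeg ends o v + ceP ends o P v := by
  classical
  set flip : E → Prop := fun e => ∃ p ∈ P, e ∈ p with hflip
  have hsplit : ∀ (τ : E → Bool),
      outdeg ends τ v = (Finset.univ.filter (fun e => flip e ∧ dsrc ends τ e = v)).card
        + (Finset.univ.filter (fun e => ¬ flip e ∧ dsrc ends τ e = v)).card := by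
    intro τ
    rw [outdeg, Finset.card_filter, Finset.card_filter, Finset.card_filter,
      ← Finset.sum_add_distrib]
    refine Finset.sum_congr rfl (fun e _ => ?_)
    by_cases hf : flip e <;> by_cases hs : dsrc ends τ e = v <;> simp [hf, hs]
  -- identify the pieces
  have hunfl : (Finset.univ.filter (fun e => ¬ flip e ∧ dsrc ends o' e = v)) =
      (Finset.univ.filter (fun e => ¬ flip e ∧ dsrc ends o e = v)) := by
    ext e
    simp only [Finset.mem_filter, Finset.mem_univ, true_and]
    constructor
    · rintro ⟨h1, h2⟩
      exact ⟨h1, by rwa [dsrc_congr ends (by rw [ho' e, if_neg h1])] at h2⟩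
    · rintro ⟨h1, h2⟩
      exact ⟨h1, by rwa [dsrc_congr ends (by rw [ho' e, if_neg h1])]⟩
  have hfl : (Finset.univ.filter (fun e => flip e ∧ dsrc ends o' e = v)) =
      (Finset.univ.filter (fun e => flip e ∧ dtgt ends o e = v)) := by
    ext e
    simp only [Finset.mem_filter, Finset.mem_univ, true_and]
    constructor
    · rintro ⟨h1, h2⟩
      exact ⟨h1, by rwa [dsrc_neg ends (by rw [ho' e, if_pos h1])] at h2⟩
    · rintro ⟨h1, h2⟩
      exact ⟨h1, by rwa [dsrc_neg ends (by rw [ho' e, if_pos h1])]⟩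
  -- flipped sets as disjoint unions over P
  have hbi : ∀ (g : E → V),
      (Finset.univ.filter (fun e => flip e ∧ g e = v)) =
        P.biUnion (fun p => p.toFinset.filter (fun e => g e = v)) := by
    intro g
    ext e
    simp only [Finset.mem_filter, Finset.mem_univ, true_and, Finset.mem_biUnion,
      List.mem_toFinset, hflip]
    tauto
  have hcard : ∀ (g : E → V),
      (Finset.univ.filter (fun e => flip e ∧ g e = v)).card =
        ∑ p ∈ P, p.countP (fun e => g e = v) := by
    intro g
    rw [hbi g, Finset.card_biUnion]
    · refine Finset.sum_congr rfl (fun p hp => ?_)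
      have hset : (Finset.filter (fun e => g e = v) p.toFinset) =
          (p.filter (fun e => g e = v)).toFinset := by
        ext e; simp
      rw [hset, List.card_toFinset, ((hnd p hp).filter _).dedup]
      simp [List.countP_eq_length_filter]
    · intro p hp q hq hpq
      simp only [Finset.disjoint_left]
      intro e he1 he2
      simp only [Finset.mem_filter, List.mem_toFinset] at he1 he2
      exact hdi p hp q hq hpq he1.1 he2.1
  -- endpoint indicator sums
  have hcs : csP ends o P v = ∑ p ∈ P, (if p.head?.map (dsrc ends o) = some v then 1 else 0) := by
    rw [csP, Finset.card_filter]
  have hce : ceP ends o P v = ∑ p ∈ P, (if p.getLast?.map (dtgt ends o) = some v then 1 else 0) := by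
    rw [ceP, Finset.card_filter]
  rw [hsplit o', hsplit o, hunfl, hfl, hcard, hcard, hcs, hce]
  have key : ∑ p ∈ P, (p.countP (fun e => dtgt ends o e = v)
        + (if p.head?.map (dsrc ends o) = some v then 1 else 0)) =
      ∑ p ∈ P, (p.countP (fun e => dsrc ends o e = v)
        + (if p.getLast?.map (dtgt ends o) = some v then 1 else 0)) := by
    refine Finset.sum_congr rfl (fun p hp => ?_)
    obtain ⟨hne, u, w, hpath⟩ := hpath p hp
    have hid := dipath_count ends (v := v) hpath
    have hh : p.head?.map (dsrc ends o) = some u := isDipath_head? ends hne hpath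
    have hg : p.getLast?.map (dtgt ends o) = some w := isDipath_getLast? ends hne hpath
    rw [hh, hg]
    have h1 : (some u = some v) ↔ (u = v) := by simp
    have h2 : (some w = some v) ↔ (w = v) := by simp
    by_cases hu : u = v <;> by_cases hw : w = v <;>
      simp [hu, hw] at hid ⊢ <;> omega
  rw [Finset.sum_add_distrib] at key
  rw [Finset.sum_add_distrib] at key
  omega
end Count

section Main
variable {V E : Type*} [Fintype E] [DecidableEq V] [DecidableEq E] {ends : E → V × V}
  {D i : ℕ} {oi oi' : E → Bool} {Pi : Finset (List E)}

lemma good_nonnil (hgood : GoodFamily ends oi D i Pi) :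
    ∀ p ∈ Pi, p ≠ [] ∧ ∃ u w, IsDipath ends oi p u w := by
  intro p hp
  obtain ⟨-, -, u, w, h1, h2, h3⟩ := hgood.1 p hp
  refine ⟨?_, u, w, h1⟩
  rintro rfl
  rw [isDipath_nil] at h1
  subst h1
  omega

lemma outdeg_rel (hgood : GoodFamily ends oi D i Pi)
    (hupd : ∀ e, oi' e = if ∃ p ∈ Pi, e ∈ p then !(oi e) else oi e) (v : V) :
    outdeg ends oi' v + csP ends oi Pi v = outdeg ends oi v + ceP ends oi Pi v :=
  outdeg_flip ends (fun p hp => (hgood.1 p hp).1) hgood.2.1 (good_nonnil hgood) hupd v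

lemma high_persist (hgood : GoodFamily ends oi D i Pi)
    (hupd : ∀ e, oi' e = if ∃ p ∈ Pi, e ∈ p then !(oi e) else oi e) {v : V}
    (h : D < outdeg ends oi' v) : D < outdeg ends oi v := by
  have h1 := outdeg_rel hgood hupd v
  have h2 := hgood.2.2.1 v
  have h3 := hgood.2.2.2 v
  rw [← csP] at h2
  rw [← ceP] at h3
  omega

lemma low_persist (hgood : GoodFamily ends oi D i Pi)
    (hupd : ∀ e, oi' e = if ∃ p ∈ Pi, e ∈ p then !(oi e) else oi e) {v : V}
    (h : outdeg ends oi' v < D) : outdeg ends oi v < D := by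
  have h1 := outdeg_rel hgood hupd v
  have h2 := hgood.2.2.1 v
  have h3 := hgood.2.2.2 v
  rw [← csP] at h2
  rw [← ceP] at h3
  omega

/-- `Reach ends oi D k w`: some vertex of out-degree `> D` reaches `w` by a directed
walk of length at most `k`. -/
def Reach (ends : E → V × V) (oi : E → Bool) (D k : ℕ) (w : V) : Prop :=
  ∃ (q : List E) (u0 : V), D < outdeg ends oi u0 ∧ IsDipath ends oi q u0 w ∧ q.length ≤ k

lemma reach_mono {k k' : ℕ} {w : V} (h : k ≤ k') (hr : Reach ends oi D k w) :
    Reach ends oi D k' w := by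
  obtain ⟨q, u0, h1, h2, h3⟩ := hr
  exact ⟨q, u0, h1, h2, h3.trans h⟩

lemma step_flipped (hgood : GoodFamily ends oi D i Pi)
    (ih : ∀ p (u v : V), IsDipath ends oi p u v → D < outdeg ends oi u →
      outdeg ends oi v < D → p.length + 2 < i → False)
    {e : E} {q0 : List E} (hq0 : q0 ∈ Pi) (he : e ∈ q0) {k : ℕ}
    (hr : Reach ends oi D k (dtgt ends oi e)) :
    1 ≤ k ∧ Reach ends oi D (k - 1) (dsrc ends oi e) := by
  obtain ⟨hnd, hlen, u1, w1, hpath, hu1, hw1⟩ := hgood.1 q0 hq0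
  obtain ⟨a, b, rfl⟩ := List.append_of_mem he
  rw [isDipath_append] at hpath
  obtain ⟨w, ha, hb⟩ := hpath
  obtain ⟨hsrc, hb'⟩ := hb
  obtain ⟨r, u0, hu0, hrp, hrlen⟩ := hr
  have hcat : IsDipath ends oi (r ++ b) u0 w1 := by
    rw [isDipath_append]; exact ⟨_, hrp, hb'⟩
  have hnotshort : ¬ ((r ++ b).length + 2 < i) := fun hc => ih _ _ _ hcat hu0 hw1 hc
  rw [List.length_append] at hnotshort
  have hlen' : a.length + 1 + b.length + 2 = i := by
    simp [List.length_append] at hlen; omega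
  have hk : a.length + 1 ≤ k := by omega
  refine ⟨by omega, a, u1, hu1, ?_, by omega⟩
  rw [hsrc]; exact ha

lemma walk_reach (hgood : GoodFamily ends oi D i Pi)
    (hupd : ∀ e, oi' e = if ∃ p ∈ Pi, e ∈ p then !(oi e) else oi e)
    (ih : ∀ p (u v : V), IsDipath ends oi p u v → D < outdeg ends oi u →
      outdeg ends oi v < D → p.length + 2 < i → False) :
    ∀ (p : List E) (x y : V) (k : ℕ), IsDipath ends oi' p x y → Reach ends oi D k x →
      ((∀ e ∈ p, ∀ q ∈ Pi, e ∉ q) ∧ Reach ends oi D (k + p.length) y) ∨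
      (∃ m, m + 2 ≤ k + p.length ∧ Reach ends oi D m y) := by
  intro p
  induction p with
  | nil =>
      intro x y k hp hr
      rw [isDipath_nil] at hp
      subst hp
      exact Or.inl ⟨by simp, reach_mono (by omega) hr⟩
  | cons e p ihp =>
      intro x y k hp hr
      obtain ⟨hsrc, hrest⟩ := hp
      by_cases hfl : ∃ q ∈ Pi, e ∈ q
      · -- flipped edge
        have hoe : oi' e = !(oi e) := by rw [hupd e, if_pos hfl]
        obtain ⟨q0, hq0, he⟩ := hfl
        have hx : dtgt ends oi e = x := by rw [← hsrc, dsrc_neg ends hoe]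
        have hy : dtgt ends oi' e = dsrc ends oi e := dtgt_neg ends hoe
        obtain ⟨hk1, hr'⟩ := step_flipped hgood ih hq0 he (by rw [hx]; exact hr)
        have := ihp (dtgt ends oi' e) y (k - 1) hrest (by rw [hy]; exact hr')
        rcases this with ⟨_, hreach⟩ | ⟨m, hm, hreach⟩
        · exact Or.inr ⟨k - 1 + p.length, by simp [List.length_cons]; omega, hreach⟩
        · exact Or.inr ⟨m, by simp [List.length_cons]; omega, hreach⟩
      · -- unflipped edge
        have hoe : oi' e = oi e := by rw [hupd e, if_neg hfl]
        have hx : dsrc ends oi e = x := by rw [← hsrc, dsrc_congr ends hoe]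
        have hy : dtgt ends oi' e = dtgt ends oi e := dtgt_congr ends hoe
        have hr' : Reach ends oi D (k + 1) (dtgt ends oi' e) := by
          rw [hy]
          obtain ⟨r, u0, h1, h2, h3⟩ := hr
          refine ⟨r ++ [e], u0, h1, ?_, by simp; omega⟩
          rw [isDipath_append]
          exact ⟨x, h2, by rw [isDipath_cons]; exact ⟨hx, rfl⟩⟩
        have := ihp (dtgt ends oi' e) y (k + 1) hrest hr'
        rcases this with ⟨hdisj, hreach⟩ | ⟨m, hm, hreach⟩
        · refine Or.inl ⟨?_, ?_⟩
          · intro e' he' q hq he'q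
            rcases List.mem_cons.mp he' with rfl | he'
            · exact hfl ⟨q, hq, he'q⟩
            · exact hdisj e' he' q hq he'q
          · exact reach_mono (by simp [List.length_cons]; omega) hreach
        · exact Or.inr ⟨m, by simp [List.length_cons] at *; omega, hreach⟩

end Main

section Main2
variable {V E : Type*} [Fintype E] [DecidableEq V] [DecidableEq E] {ends : E → V × V}
  {D i : ℕ} {oi oi' : E → Bool} {Pi : Finset (List E)}

lemma noshort_succ (hgood : GoodFamily ends oi D i Pi)
    (hmax : ∀ p ∉ Pi, GoodFamily ends oi D i (insert p Pi) → False)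
    (hupd : ∀ e, oi' e = if ∃ p ∈ Pi, e ∈ p then !(oi e) else oi e)
    (ih : ∀ p (u v : V), IsDipath ends oi p u v → D < outdeg ends oi u →
      outdeg ends oi v < D → p.length + 2 < i → False) :
    ∀ p (u v : V), IsDipath ends oi' p u v → D < outdeg ends oi' u →
      outdeg ends oi' v < D → p.length + 2 < i + 1 → False := by
  -- first for nodup paths
  have key : ∀ p (u v : V), p.Nodup → IsDipath ends oi' p u v → D < outdeg ends oi' u →
      outdeg ends oi' v < D → p.length + 2 < i + 1 → False := by
    intro p u v hnd hp hu hv hshort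
    have hui : D < outdeg ends oi u := high_persist hgood hupd hu
    have hvi : outdeg ends oi v < D := low_persist hgood hupd hv
    have hr0 : Reach ends oi D 0 u := ⟨[], u, hui, rfl, le_rfl⟩
    rcases walk_reach hgood hupd ih p u v 0 hp hr0 with ⟨hunfl, hreach⟩ | ⟨m, hm, hreach⟩
    · -- all edges unflipped
      -- length is exactly i - 2
      have hlen : p.length + 2 = i := by
        obtain ⟨q, u0, h1, h2, h3⟩ := hreach
        have hge : ¬ (q.length + 2 < i) := fun hc => ih q u0 v h2 h1 hvi hc
        omega
      have hpi : IsDipath ends oi p u v :=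
        isDipath_congr ends (fun e he => by rw [hupd e, if_neg (fun ⟨q, hq, heq⟩ => hunfl e he q hq heq)]) hp
      have hpne : p ≠ [] := by
        rintro rfl
        rw [isDipath_nil] at hpi
        subst hpi
        omega
      have hpnotin : p ∉ Pi := by
        intro hmem
        obtain ⟨e, he⟩ := List.exists_mem_of_ne_nil p hpne
        exact hunfl e he p hmem he
      apply hmax p hpnotin
      refine ⟨?_, ?_, ?_, ?_⟩
      · intro r hr
        rcases Finset.mem_insert.mp hr with rfl | hr
        · exact ⟨hnd, hlen, u, v, hpi, hui, hvi⟩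
        · exact hgood.1 r hr
      · intro r hr s hs hrs
        rcases Finset.mem_insert.mp hr with hr' | hr' <;>
          rcases Finset.mem_insert.mp hs with hs' | hs'
        · exact absurd (hr'.trans hs'.symm) hrs
        · subst hr'; exact fun e he hes => hunfl e he s hs' hes
        · subst hs'; exact fun e he hes => hunfl e hes r hr' he
        · exact hgood.2.1 r hr' s hs' hrs
      · -- source multiplicities
        intro w
        rw [Finset.filter_insert]
        by_cases hc : p.head?.map (dsrc ends oi) = some w
        · rw [if_pos hc]
          have hw : w = u := by
            have := isDipath_head? ends hpne hpi
            rw [this] at hc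
            exact (Option.some_injective V (hc.symm)).symm ▸ rfl
          subst hw
          have hrel := outdeg_rel hgood hupd w
          have h3 := hgood.2.2.1 w
          have h4 := hgood.2.2.2 w
          have hcard := Finset.card_insert_le p (Finset.filter
            (fun q => q.head?.map (dsrc ends oi) = some w) Pi)
          have hcs : csP ends oi Pi w = (Finset.filter
            (fun q => q.head?.map (dsrc ends oi) = some w) Pi).card := rfl
          have hce : ceP ends oi Pi w = (Finset.filter
            (fun q => q.getLast?.map (dtgt ends oi) = some w) Pi).card := rfl
          omega
        · rw [if_neg hc]
          exact hgood.2.2.1 w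
      · -- sink multiplicities
        intro w
        rw [Finset.filter_insert]
        by_cases hc : p.getLast?.map (dtgt ends oi) = some w
        · rw [if_pos hc]
          have hw : w = v := by
            have := isDipath_getLast? ends hpne hpi
            rw [this] at hc
            exact (Option.some_injective V (hc.symm)).symm ▸ rfl
          subst hw
          have hrel := outdeg_rel hgood hupd w
          have h3 := hgood.2.2.1 w
          have h4 := hgood.2.2.2 w
          have hcard := Finset.card_insert_le p (Finset.filter
            (fun q => q.getLast?.map (dtgt ends oi) = some w) Pi)
          have hcs : csP ends oi Pi w = (Finset.filter
            (fun q => q.head?.map (dsrc ends oi) = some w) Pi).card := rfl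
          have hce : ceP ends oi Pi w = (Finset.filter
            (fun q => q.getLast?.map (dtgt ends oi) = some w) Pi).card := rfl
          omega
        · rw [if_neg hc]
          exact hgood.2.2.2 w
    · -- a strictly shorter reach to v at stage i: contradiction with ih
      obtain ⟨q, u0, h1, h2, h3⟩ := hreach
      exact ih q u0 v h2 h1 hvi (by omega)
  -- now remove the Nodup assumption by induction on a length bound
  have main : ∀ n (p : List E), p.length ≤ n → ∀ (u v : V), IsDipath ends oi' p u v →
      D < outdeg ends oi' u → outdeg ends oi' v < D → p.length + 2 < i + 1 → False := by
    intro n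
    induction n with
    | zero =>
        intro p hlen u v hp hu hv hs
        have hpnil : p = [] := List.eq_nil_of_length_eq_zero (Nat.le_zero.mp hlen)
        subst hpnil
        exact key [] u v List.nodup_nil hp hu hv hs
    | succ n ihn =>
        intro p hlen u v hp hu hv hs
        by_cases hnd : p.Nodup
        · exact key p u v hnd hp hu hv hs
        · obtain ⟨q, hq1, hq2⟩ := isDipath_shorten ends hp hnd
          exact ihn q (by omega) u v hq2 hu hv (by omega)
  exact fun p u v hp hu hv hs => main p.length p le_rfl u v hp hu hv hs
end Main2

section Growth
variable {V E : Type*} [Fintype V] [Fintype E] [DecidableEq V] [DecidableEq E]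

/-- vertices reachable from `u` in at most `k` steps under orientation `τ` -/
def reachSet (ends : E → V × V) (τ : E → Bool) (u : V) : ℕ → Finset V
  | 0 => {u}
  | (k+1) => reachSet ends τ u k ∪
      (Finset.univ.filter (fun e => dsrc ends τ e ∈ reachSet ends τ u k)).image (dtgt ends τ)

variable {ends : E → V × V} {τ σ : E → Bool} {u : V}

lemma self_mem_reachSet : ∀ k, u ∈ reachSet ends τ u k
  | 0 => Finset.mem_singleton_self u
  | (k+1) => Finset.mem_union_left _ (self_mem_reachSet k)

lemma reachSet_dipath : ∀ k, ∀ v ∈ reachSet ends τ u k,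
    ∃ p : List E, IsDipath ends τ p u v ∧ p.length ≤ k := by
  intro k
  induction k with
  | zero =>
      intro v hv
      rw [reachSet, Finset.mem_singleton] at hv
      exact ⟨[], hv.symm, by simp⟩
  | succ k ih =>
      intro v hv
      rw [reachSet, Finset.mem_union] at hv
      rcases hv with hv | hv
      · obtain ⟨p, h1, h2⟩ := ih v hv
        exact ⟨p, h1, by omega⟩
      · rw [Finset.mem_image] at hv
        obtain ⟨e, he, rfl⟩ := hv
        rw [Finset.mem_filter] at he
        obtain ⟨p, h1, h2⟩ := ih _ he.2
        refine ⟨p ++ [e], ?_, by simp; omega⟩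
        rw [isDipath_append]
        exact ⟨dsrc ends τ e, h1, rfl, rfl⟩

/-- main counting step: if every reachable vertex has out-degree ≥ D (and `u` has
out-degree > D), the reach sets grow geometrically w.r.t. arboricity `lam`. -/
lemma reachSet_growth {D lam k : ℕ}
    (hσ : ∀ v : V, outdeg ends σ v ≤ lam)
    (hu : D < outdeg ends τ u)
    (hall : ∀ w ∈ reachSet ends τ u k, D ≤ outdeg ends τ w) :
    D * (reachSet ends τ u k).card + 1 ≤ lam * (reachSet ends τ u (k+1)).card := by
  classical
  set S := reachSet ends τ u k
  set S' := reachSet ends τ u (k+1) with hS'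
  set T : Finset E := Finset.univ.filter (fun e => dsrc ends τ e ∈ S) with hT
  -- lower bound: T.card ≥ D * S.card + 1
  have hTsum : T.card = ∑ w ∈ S, (T.filter (fun e => dsrc ends τ e = w)).card := by
    apply Finset.card_eq_sum_card_fiberwise
    intro e he
    rw [hT, Finset.mem_coe, Finset.mem_filter] at he
    exact he.2
  have hfib : ∀ w ∈ S, (T.filter (fun e => dsrc ends τ e = w)).card = outdeg ends τ w := by
    intro w hw
    rw [outdeg]
    congr 1
    ext e
    simp only [hT, Finset.filter_filter, Finset.mem_filter, Finset.mem_univ, true_and]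
    constructor
    · rintro ⟨-, h⟩; exact h
    · rintro h; exact ⟨h ▸ hw, h⟩
  have hlower : D * S.card + 1 ≤ T.card := by
    rw [hTsum]
    have : ∑ w ∈ S, D < ∑ w ∈ S, (T.filter (fun e => dsrc ends τ e = w)).card := by
      apply Finset.sum_lt_sum
      · intro w hw; rw [hfib w hw]; exact hall w hw
      · exact ⟨u, self_mem_reachSet k, by rw [hfib u (self_mem_reachSet k)]; exact hu⟩
    rw [Finset.sum_const, smul_eq_mul, mul_comm] at this
    omega
  -- upper bound: T.card ≤ lam * S'.card
  have hupper : T.card ≤ lam * S'.card := by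
    have hTsum' : T.card = ∑ w ∈ S', (T.filter (fun e => dsrc ends σ e = w)).card := by
      apply Finset.card_eq_sum_card_fiberwise
      intro e he
      rw [hT, Finset.mem_coe, Finset.mem_filter] at he
      have h1 : dsrc ends τ e ∈ S' := by
        rw [hS', reachSet]
        exact Finset.mem_union_left _ he.2
      have h2 : dtgt ends τ e ∈ S' := by
        rw [hS', reachSet]
        apply Finset.mem_union_right
        rw [Finset.mem_image]
        exact ⟨e, by rw [Finset.mem_filter]; exact ⟨Finset.mem_univ e, he.2⟩, rfl⟩
      have : dsrc ends σ e = dsrc ends τ e ∨ dsrc ends σ e = dtgt ends τ e := by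
        cases hb : σ e <;> cases hb' : τ e <;>
          simp [dsrc, dtgt, hb, hb']
      rcases this with h | h
      · rwa [h]
      · rwa [h]
    rw [hTsum']
    calc ∑ w ∈ S', (T.filter (fun e => dsrc ends σ e = w)).card
        ≤ ∑ w ∈ S', lam := by
          apply Finset.sum_le_sum
          intro w _
          refine le_trans (Finset.card_le_card ?_) (hσ w)
          intro e he
          rw [Finset.mem_filter] at he ⊢
          exact ⟨Finset.mem_univ e, he.2⟩
      _ = lam * S'.card := by rw [Finset.sum_const, smul_eq_mul, mul_comm]
  omega

end Growth

/-- Ghaffari–Su augmentation process (blocking paths) for approximate Nash-Williams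
edge-orientation.  Suppose the multigraph `(V, E, ends)` has an orientation of maximum
out-degree `λ` (arboricity `λ`), `D = ⌈(1+ε)λ⌉`, and at each stage `i` a maximal family
`P i` of edge-disjoint length-`i` `s`–`t` paths of the auxiliary graph is reversed.  Then
no stage-`i` auxiliary graph has an `s`–`t` path of length `< i`, and after
`ℓ = O((log n)/ε)` stages every out-degree is at most `D`. -/
theorem stmt18 : ∃ C : ℝ, 0 < C ∧
    ∀ (V E : Type) [Fintype V] [Fintype E] [DecidableEq V] [DecidableEq E],
    ∀ (ends : E → V × V) (lam : ℕ) (ε : ℝ) (o : ℕ → E → Bool) (P : ℕ → Finset (List E)),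
      0 < ε → ε ≤ 1 →
      (∃ σ : E → Bool, ∀ v : V, outdeg ends σ v ≤ lam) →
      (∀ i : ℕ, GoodFamily ends (o i) (Nat.ceil ((1 + ε) * lam)) i (P i)) →
      (∀ i : ℕ, ∀ p : List E, p ∉ P i →
        GoodFamily ends (o i) (Nat.ceil ((1 + ε) * lam)) i (insert p (P i)) → False) →
      (∀ i : ℕ, o (i + 1) = fun e => if ∃ p ∈ P i, e ∈ p then !(o i e) else o i e) →
      (∀ i : ℕ, ∀ (p : List E) (u v : V), IsDipath ends (o i) p u v →
        Nat.ceil ((1 + ε) * lam) < outdeg ends (o i) u →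
        outdeg ends (o i) v < Nat.ceil ((1 + ε) * lam) →
        p.length + 2 < i → False) ∧
      (∀ ℓ : ℕ, C * Real.log (Fintype.card V : ℝ) / ε ≤ (ℓ : ℝ) →
        ∀ v : V, outdeg ends (o ℓ) v ≤ Nat.ceil ((1 + ε) * lam)) := by
  refine ⟨10, by norm_num, ?_⟩
  intro V E _ _ _ _ ends lam ε o P hε0 hε1 hσ' hgood hmax hupd
  obtain ⟨σ, hσ⟩ := hσ'
  set D : ℕ := Nat.ceil ((1 + ε) * lam) with hD
  have noshort : ∀ i, ∀ (p : List E) (u v : V), IsDipath ends (o i) p u v →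
      D < outdeg ends (o i) u → outdeg ends (o i) v < D → p.length + 2 < i → False := by
    intro i
    induction i with
    | zero => intro p u v _ _ _ h; omega
    | succ i ih =>
        exact noshort_succ (hgood i) (hmax i) (fun e => by rw [hupd i]) ih
  refine ⟨noshort, ?_⟩
  intro ℓ hl v0
  by_contra hv0'
  push_neg at hv0'
  have hv0 : D < outdeg ends (o ℓ) v0 := hv0'
  set τ : E → Bool := o ℓ with hτ
  have hlamD : lam ≤ D := by
    have hnn : (0 : ℝ) ≤ (lam : ℝ) := Nat.cast_nonneg lam
    have h1 : ((lam : ℝ)) ≤ (1 + ε) * lam := by nlinarith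
    calc lam = ⌈(lam : ℝ)⌉₊ := by rw [Nat.ceil_natCast]
      _ ≤ D := Nat.ceil_mono h1
  by_cases hcard : Fintype.card V ≤ 1
  · -- at most one vertex: every orientation has the same out-degrees
    have hone : ∀ a b : V, a = b := Fintype.card_le_one_iff.mp hcard
    have h1 : outdeg ends τ v0 ≤ outdeg ends σ v0 := by
      rw [outdeg, outdeg]
      apply Finset.card_le_card
      intro e _
      rw [Finset.mem_filter]
      exact ⟨Finset.mem_univ e, hone _ _⟩
    have h2 := hσ v0
    omega
  · push_neg at hcard
    have hcard2 : 2 ≤ Fintype.card V := hcard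
    set L : ℝ := Real.log (Fintype.card V : ℝ) with hL
    have hlogn : Real.log 2 ≤ L := by
      rw [hL]
      apply Real.log_le_log (by norm_num)
      exact_mod_cast hcard2
    have hlog2 : (0.6931471803 : ℝ) < Real.log 2 := Real.log_two_gt_d9
    have h10 : 10 * L ≤ ε * ℓ := by
      rw [div_le_iff₀ hε0] at hl
      linarith
    have hεℓ : ε * ℓ ≤ ℓ := by
      have hnn : (0 : ℝ) ≤ (ℓ : ℝ) := Nat.cast_nonneg ℓ
      nlinarith
    have hℓ3 : 3 ≤ ℓ := by
      have h3 : (3 : ℝ) ≤ (ℓ : ℝ) := by linarith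
      exact_mod_cast h3
    set K : ℕ := ℓ - 3 with hK
    by_cases hlow : ∃ k ≤ K, ∃ w ∈ reachSet ends τ v0 k, outdeg ends τ w < D
    · obtain ⟨k, hk, w, hw, hwlow⟩ := hlow
      obtain ⟨p, hp, hplen⟩ := reachSet_dipath k w hw
      exact noshort ℓ p v0 w hp hv0 hwlow (by omega)
    · push_neg at hlow
      have hgrow : ∀ k, k ≤ K + 1 →
          ((1 + ε) : ℝ) ^ k ≤ ((reachSet ends τ v0 k).card : ℝ) := by
        intro k
        induction k with
        | zero => intro _; simp [reachSet]
        | succ k ih =>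
            intro hk
            have h1 := ih (by omega)
            have h2 := reachSet_growth (lam := lam) (k := k) hσ hv0
              (fun w hw => hlow k (by omega) w hw)
            have hlam1 : 1 ≤ lam := by
              rcases Nat.eq_zero_or_pos lam with h0 | h0
              · rw [h0] at h2; omega
              · exact h0
            set c : ℕ := (reachSet ends τ v0 k).card
            set c' : ℕ := (reachSet ends τ v0 (k + 1)).card
            have hDge : (1 + ε) * lam ≤ (D : ℝ) := Nat.le_ceil _
            have hcast : (D : ℝ) * c + 1 ≤ (lam : ℝ) * c' := by exact_mod_cast h2
            have hcnn : (0 : ℝ) ≤ (c : ℝ) := Nat.cast_nonneg c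
            have hlamR : (0 : ℝ) < (lam : ℝ) := by exact_mod_cast hlam1
            have hmul : (lam : ℝ) * ((1 + ε) * c) ≤ (lam : ℝ) * c' := by nlinarith
            have hc' : ((1 + ε) : ℝ) * c ≤ (c' : ℝ) := le_of_mul_le_mul_left hmul hlamR
            calc ((1 + ε) : ℝ) ^ (k + 1) = (1 + ε) * (1 + ε) ^ k := by ring
              _ ≤ (1 + ε) * c := by nlinarith
              _ ≤ (c' : ℝ) := hc'
      have hfin := hgrow (K + 1) le_rfl
      have hcardle : (((reachSet ends τ v0 (K + 1)).card : ℕ) : ℝ) ≤ (Fintype.card V : ℝ) := by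
        exact_mod_cast (Finset.card_le_univ _).trans_eq Finset.card_univ
      have hpow : ((K : ℝ) + 1) * Real.log (1 + ε) ≤ L := by
        have h1e : (0 : ℝ) < 1 + ε := by linarith
        have hle := Real.log_le_log (by positivity) (hfin.trans hcardle)
        rw [Real.log_pow] at hle
        rw [hL]
        push_cast at hle
        linarith
      have hloge : ε / 2 ≤ Real.log (1 + ε) := by
        have h1e : (0 : ℝ) < 1 + ε := by linarith
        have h := Real.log_le_sub_one_of_pos (x := (1 + ε)⁻¹) (by positivity)
        rw [Real.log_inv] at h
        have hinv : (1 + ε)⁻¹ - 1 = -(ε / (1 + ε)) := by field_simp; ring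
        rw [hinv] at h
        have h2 : ε / (1 + ε) ≤ Real.log (1 + ε) := by linarith
        have h3 : ε / 2 ≤ ε / (1 + ε) := by
          apply div_le_div_of_nonneg_left (le_of_lt hε0) h1e
          linarith
        linarith
      -- (K+1) * ε/2 ≤ L, K + 3 = ℓ
      have hKnn : (0 : ℝ) ≤ (K : ℝ) + 1 := by positivity
      have hhalf : ((K : ℝ) + 1) * (ε / 2) ≤ L :=
        le_trans (mul_le_mul_of_nonneg_left hloge hKnn) hpow
      have hKℓ : (K : ℝ) + 3 = (ℓ : ℝ) := by
        have : K + 3 = ℓ := by omega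
        exact_mod_cast this
      -- 10 L ≤ ε ℓ = ε (K+1) + 2 ε ≤ 2 L + 2 ε ≤ 2 L + 2
      nlinarith
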